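/- Let φ be an 𝔽_p-linear endomorphism of V, let g ∈ V* be a linear functional, let s ≥ 0, and let S be a system of line representatives for the image φ(V). Set P := ∏_{v ∈ S, g(v) ≠ 0} ℓ(v)^(p^s) ∈ B. Then the derivation P · D_{g∘φ} lies in the B-submodule of the module of 𝔽_p-linear derivations of B generated by the set { φ^{[p^r]} : r ≥ s }. -/

import Mathlib

open MvPolynomial

/-- The linear form `ℓ(v) = Σ_i v_i X_i` in `B = (ZMod p)[X_1, …, X_m]` associated to a
vector `v : Fin m → ZMod p`. -/
noncomputable def linForm (p m : ℕ) (v : Fin m → ZMod p) :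
    MvPolynomial (Fin m) (ZMod p) :=
  ∑ i : Fin m, MvPolynomial.C (v i) * MvPolynomial.X i

/-- A system of line representatives for a subspace `W` of an `𝔽_p`-module:
a finite set of nonzero elements of `W` such that every nonzero element of `W`
is a scalar multiple of exactly one element of the set. -/
def IsLineReps {p : ℕ} {M : Type*} [AddCommGroup M] [Module (ZMod p) M]
    (W : Submodule (ZMod p) M) (S : Finset M) : Prop :=
  (∀ w ∈ S, w ∈ W ∧ w ≠ 0) ∧
    ∀ w ∈ W, w ≠ 0 → ∃! u, u ∈ S ∧ ∃ c : ZMod p, w = c • u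

/-- For `f ∈ V*`, the unique `𝔽_p`-linear derivation `D_f` of `B` with
`D_f(X_i) = f(e_i)` (a constant) for each `i`. -/
noncomputable def constDer (p m : ℕ) (f : (Fin m → ZMod p) →ₗ[ZMod p] ZMod p) :
    Derivation (ZMod p) (MvPolynomial (Fin m) (ZMod p)) (MvPolynomial (Fin m) (ZMod p)) :=
  MvPolynomial.mkDerivation (ZMod p) fun i => MvPolynomial.C (f (Pi.single i 1))

/-- For an endomorphism `φ` of `V` and `r ≥ 0`, the unique `𝔽_p`-linear derivation
`φ^{[p^r]}` of `B` with `φ^{[p^r]}(X_i) = ℓ(φ(e_i))^(p^r)` for each `i`. -/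
noncomputable def frobDer (p m : ℕ)
    (φ : (Fin m → ZMod p) →ₗ[ZMod p] (Fin m → ZMod p)) (r : ℕ) :
    Derivation (ZMod p) (MvPolynomial (Fin m) (ZMod p)) (MvPolynomial (Fin m) (ZMod p)) :=
  MvPolynomial.mkDerivation (ZMod p) fun i => (linForm p m (φ (Pi.single i 1))) ^ p ^ r


open Polynomial in
theorem zmod_prod_X_sub_C (p : ℕ) [Fact p.Prime] :
    ∏ a : ZMod p, (Polynomial.X - Polynomial.C a) = Polynomial.X ^ p - Polynomial.X := by
  have hp1 : 1 < p := (Fact.out : p.Prime).one_lt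
  have h := FiniteField.roots_X_pow_card_sub_X (ZMod p)
  rw [ZMod.card] at h
  have hmonic : (Polynomial.X ^ p - Polynomial.X : (ZMod p)[X]).Monic := by
    apply Polynomial.monic_X_pow_sub
    rw [Polynomial.degree_X]
    exact_mod_cast hp1
  have hcard : (Polynomial.X ^ p - Polynomial.X : (ZMod p)[X]).roots.card
      = (Polynomial.X ^ p - Polynomial.X : (ZMod p)[X]).natDegree := by
    rw [h, FiniteField.X_pow_card_sub_X_natDegree_eq _ hp1]
    show Finset.univ.card = p
    rw [Finset.card_univ, ZMod.card]
  have h2 := Polynomial.prod_multiset_X_sub_C_of_monic_of_roots_card_eq hmonic hcard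
  rw [h] at h2
  rw [← h2, Finset.prod_eq_multiset_prod]

theorem field_prod_lin (p : ℕ) [Fact p.Prime] (F : Type*) [Field F] [CharP F p] (y z : F) :
    ∏ c : ZMod p, (y - (ZMod.castHom (dvd_refl p) F) c * z) = y ^ p - z ^ (p - 1) * y := by
  have hp1 : 1 < p := (Fact.out : p.Prime).one_lt
  set χ := ZMod.castHom (dvd_refl p) F
  have key : ∀ t : F, ∏ c : ZMod p, (t - χ c) = t ^ p - t := by
    intro t
    have h := congrArg (fun q => Polynomial.eval t (Polynomial.map χ q)) (zmod_prod_X_sub_C p)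
    simpa [Polynomial.eval_prod, Polynomial.map_prod, Polynomial.map_sub,
      Polynomial.map_pow, Polynomial.eval_sub, Polynomial.eval_pow] using h
  rcases eq_or_ne z 0 with hz | hz
  · subst hz
    simp only [mul_zero, sub_zero, zero_pow, Finset.prod_const]
    rw [zero_pow (by omega : p - 1 ≠ 0), zero_mul, sub_zero, Finset.card_univ, ZMod.card]
  · have h1 : ∀ c : ZMod p, y - χ c * z = z * (y * z⁻¹ - χ c) := by
      intro c; field_simp
    rw [Finset.prod_congr rfl (fun c _ => h1 c), Finset.prod_mul_distrib, Finset.prod_const,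
      Finset.card_univ, ZMod.card, key, mul_sub]
    congr 1
    · rw [mul_pow, inv_pow, mul_comm, mul_assoc, inv_mul_cancel₀ (pow_ne_zero _ hz), mul_one]
    · have : z ^ p = z ^ (p - 1) * z := by
        conv_lhs => rw [show p = (p - 1) + 1 by omega]
        rw [pow_succ]
      rw [this, mul_assoc, mul_comm z (y * z⁻¹), mul_assoc, inv_mul_cancel₀ hz, mul_one]

theorem mv_prod_lin (p m : ℕ) [Fact p.Prime] (y z : MvPolynomial (Fin m) (ZMod p)) :
    ∏ c : ZMod p, (y - MvPolynomial.C c * z) = y ^ p - z ^ (p - 1) * y := by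
  set B := MvPolynomial (Fin m) (ZMod p)
  let F := FractionRing B
  have inj : Function.Injective (algebraMap B F) := IsFractionRing.injective B F
  haveI : CharP F p := charP_of_injective_ringHom inj p
  apply inj
  have hcomm : ∀ c : ZMod p, algebraMap B F (MvPolynomial.C c) = ZMod.castHom (dvd_refl p) F c := by
    intro c
    exact RingHom.congr_fun (Subsingleton.elim
      ((algebraMap B F).comp (MvPolynomial.C : ZMod p →+* B)) (ZMod.castHom (dvd_refl p) F)) c
  rw [map_prod, map_sub, map_pow, map_mul, map_pow]
  rw [Finset.prod_congr rfl (fun c _ => by rw [map_sub, map_mul, hcomm c])]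
  exact field_prod_lin p F _ _

theorem linForm_add (p m : ℕ) (v w : Fin m → ZMod p) :
    linForm p m (v + w) = linForm p m v + linForm p m w := by
  simp [linForm, add_mul, Finset.sum_add_distrib]

theorem linForm_smul (p m : ℕ) (c : ZMod p) (v : Fin m → ZMod p) :
    linForm p m (c • v) = MvPolynomial.C c * linForm p m v := by
  simp [linForm, Finset.mul_sum, mul_assoc]

theorem linForm_sub (p m : ℕ) (v w : Fin m → ZMod p) :
    linForm p m (v - w) = linForm p m v - linForm p m w := by
  simp [linForm, sub_mul, Finset.sum_sub_distrib]

theorem linForm_zero (p m : ℕ) : linForm p m 0 = 0 := by simp [linForm]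

noncomputable def eF (p m : ℕ) : (n : ℕ) → (Fin n → (Fin m → ZMod p)) →
    (Fin m → ZMod p) → MvPolynomial (Fin m) (ZMod p)
  | 0, _, w => linForm p m w
  | n+1, t, w => (eF p m n (Fin.tail t) w) ^ p
      - (eF p m n (Fin.tail t) (t 0)) ^ (p - 1) * eF p m n (Fin.tail t) w

theorem eF_add (p m : ℕ) [Fact p.Prime] (n : ℕ) (t : Fin n → (Fin m → ZMod p))
    (w w' : Fin m → ZMod p) :
    eF p m n t (w + w') = eF p m n t w + eF p m n t w' := by
  induction n with
  | zero => exact linForm_add p m w w'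
  | succ n ih =>
    simp only [eF, ih]
    rw [add_pow_char]
    ring

theorem eF_smul (p m : ℕ) [Fact p.Prime] (n : ℕ) (t : Fin n → (Fin m → ZMod p))
    (c : ZMod p) (w : Fin m → ZMod p) :
    eF p m n t (c • w) = MvPolynomial.C c * eF p m n t w := by
  induction n with
  | zero => exact linForm_smul p m c w
  | succ n ih =>
    simp only [eF, ih]
    rw [mul_pow, ← map_pow, ZMod.pow_card]
    ring

theorem eF_sub (p m : ℕ) [Fact p.Prime] (n : ℕ) (t : Fin n → (Fin m → ZMod p))
    (w w' : Fin m → ZMod p) :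
    eF p m n t (w - w') = eF p m n t w - eF p m n t w' := by
  have h := eF_add p m n t (w - w') w'
  rw [sub_add_cancel] at h
  rw [h]; ring

theorem eF_zero (p m : ℕ) [Fact p.Prime] (n : ℕ) (t : Fin n → (Fin m → ZMod p)) :
    eF p m n t 0 = 0 := by
  have h := eF_add p m n t 0 0
  rw [add_zero] at h
  exact (left_eq_add.mp h)

theorem eF_span_zero (p m : ℕ) [Fact p.Prime] (n : ℕ) (t : Fin n → (Fin m → ZMod p))
    (w : Fin m → ZMod p) (hw : w ∈ Submodule.span (ZMod p) (Set.range t)) :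
    eF p m n t w = 0 := by
  induction n generalizing w with
  | zero =>
    rw [Set.range_eq_empty t, Submodule.span_empty, Submodule.mem_bot] at hw
    rw [hw]
    exact linForm_zero p m
  | succ n ih =>
    have hrange : Set.range t = insert (t 0) (Set.range (Fin.tail t)) := by
      conv_lhs => rw [← Fin.cons_self_tail t]
      exact Fin.range_cons _ _
    rw [hrange, Submodule.mem_span_insert] at hw
    obtain ⟨a, z, hz, rfl⟩ := hw
    have hAz : eF p m n (Fin.tail t) z = 0 := ih (Fin.tail t) z hz
    have : eF p m n (Fin.tail t) (a • t 0 + z)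
        = MvPolynomial.C a * eF p m n (Fin.tail t) (t 0) := by
      rw [eF_add, eF_smul, hAz, add_zero]
    show eF p m n (Fin.tail t) _ ^ p - _ ^ (p - 1) * eF p m n (Fin.tail t) _ = 0
    rw [this, mul_pow, ← map_pow, ZMod.pow_card]
    have hp1 : 1 ≤ p := (Fact.out : p.Prime).one_lt.le
    have hpow : (eF p m n (Fin.tail t) (t 0)) ^ (p - 1) * eF p m n (Fin.tail t) (t 0)
        = (eF p m n (Fin.tail t) (t 0)) ^ p := by
      rw [← pow_succ]
      congr 1
      omega
    rw [mul_comm (_ ^ (p-1)) (MvPolynomial.C a * _), mul_assoc, mul_comm _ (_ ^ (p-1)), hpow]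
    ring

theorem eF_prod (p m : ℕ) [Fact p.Prime] (n : ℕ) (t : Fin n → (Fin m → ZMod p))
    (w : Fin m → ZMod p) :
    eF p m n t w = ∏ c : Fin n → ZMod p, linForm p m (w - ∑ i, c i • t i) := by
  induction n generalizing w with
  | zero =>
    rw [Finset.prod_eq_single_of_mem (fun _ : Fin 0 => (0 : ZMod p)) (Finset.mem_univ _)
      (fun b _ hb => absurd (Subsingleton.elim b _) hb)]
    simp [eF]
  | succ n ih =>
    show eF p m n (Fin.tail t) w ^ p
        - eF p m n (Fin.tail t) (t 0) ^ (p - 1) * eF p m n (Fin.tail t) w = _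
    rw [← mv_prod_lin p m]
    have h1 : ∀ c : ZMod p,
        eF p m n (Fin.tail t) w - MvPolynomial.C c * eF p m n (Fin.tail t) (t 0)
        = eF p m n (Fin.tail t) (w - c • t 0) := by
      intro c
      rw [eF_sub, eF_smul]
    rw [Finset.prod_congr rfl fun c _ => h1 c]
    rw [Finset.prod_congr rfl fun c _ => ih (Fin.tail t) (w - c • t 0)]
    rw [← Equiv.prod_comp (Fin.consEquiv (fun _ : Fin (n+1) => ZMod p))]
    rw [Fintype.prod_prod_type]
    apply Finset.prod_congr rfl
    intro c _
    apply Finset.prod_congr rfl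
    intro c' _
    congr 1
    rw [show ((Fin.consEquiv (fun _ : Fin (n+1) => ZMod p)) (c, c') : Fin (n+1) → ZMod p)
      = Fin.cons c c' from rfl]
    rw [Fin.sum_univ_succ]
    simp only [Fin.cons_zero, Fin.cons_succ]
    rw [sub_add_eq_sub_sub]
    rfl

theorem eF_coeff (p m : ℕ) [Fact p.Prime] (n : ℕ) (t : Fin n → (Fin m → ZMod p)) :
    ∃ a : ℕ → MvPolynomial (Fin m) (ZMod p), (∀ j, n + 1 ≤ j → a j = 0) ∧
      ∀ w, eF p m n t w = ∑ j ∈ Finset.range (n + 1), a j * (linForm p m w) ^ (p ^ j) := by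
  have hp0 : p ≠ 0 := (Fact.out : p.Prime).ne_zero
  induction n with
  | zero =>
    refine ⟨fun j => if j = 0 then 1 else 0, fun j hj => if_neg (by omega), fun w => ?_⟩
    simp [eF]
  | succ n ih =>
    obtain ⟨a, ha0, ha⟩ := ih (Fin.tail t)
    set z := eF p m n (Fin.tail t) (t 0) with hz
    refine ⟨fun j => (if j = 0 then 0 else (a (j-1)) ^ p) - z ^ (p-1) * a j, ?_, ?_⟩
    · intro j hj
      simp only []
      rw [if_neg (by omega : ¬ j = 0), ha0 (j-1) (by omega), ha0 j (by omega)]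
      simp [zero_pow hp0]
    · intro w
      show eF p m n (Fin.tail t) w ^ p - z ^ (p - 1) * eF p m n (Fin.tail t) w = _
      rw [ha w, sum_pow_char]
      have hterm : ∀ j, (a j * linForm p m w ^ p ^ j) ^ p
          = a j ^ p * linForm p m w ^ p ^ (j + 1) := by
        intro j
        rw [mul_pow, ← pow_mul, ← pow_succ]
      rw [Finset.sum_congr rfl fun j _ => hterm j]
      rw [Finset.mul_sum]
      conv_rhs => rw [Finset.sum_congr rfl (fun j _ => sub_mul
        (if j = 0 then 0 else (a (j-1)) ^ p) (z ^ (p-1) * a j) (linForm p m w ^ p ^ j)),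
        Finset.sum_sub_distrib]
      congr 1
      · conv_rhs => rw [Finset.sum_range_succ']
        simp only [Nat.succ_ne_zero, if_false, if_true, Nat.add_sub_cancel, ite_true,
          if_pos rfl, zero_mul, add_zero]
      · conv_rhs => rw [Finset.sum_range_succ]
        rw [ha0 (n+1) le_rfl]
        simp only [mul_zero, zero_mul, add_zero, mul_assoc]

/-- with `S` a system of line representatives for `φ(V)` and
`P = ∏_{v ∈ S, g(v) ≠ 0} ℓ(v)^(p^s)`, the derivation `P • D_{g∘φ}` lies in the
`B`-submodule of derivations generated by `{φ^{[p^r]} : r ≥ s}`. -/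
theorem stmt7 (p m : ℕ) [Fact p.Prime] (hm : 1 ≤ m)
    (φ : (Fin m → ZMod p) →ₗ[ZMod p] (Fin m → ZMod p))
    (g : (Fin m → ZMod p) →ₗ[ZMod p] ZMod p) (s : ℕ)
    (S : Finset (Fin m → ZMod p))
    (hS : IsLineReps (LinearMap.range φ) S) :
    (∏ v ∈ S.filter (fun v => g v ≠ 0), (linForm p m v) ^ p ^ s) • constDer p m (g ∘ₗ φ) ∈
      Submodule.span (MvPolynomial (Fin m) (ZMod p))
        {d | ∃ r, s ≤ r ∧ d = frobDer p m φ r} := by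
  classical
  by_cases hgφ : g ∘ₗ φ = 0
  · have h0 : constDer p m (g ∘ₗ φ) = 0 := by
      apply MvPolynomial.derivation_ext
      intro i
      simp [constDer, MvPolynomial.mkDerivation_X, hgφ, Derivation.zero_apply]
    rw [h0, smul_zero]
    exact Submodule.zero_mem _
  · have hex : ∃ x, g (φ x) ≠ 0 := by
      by_contra h
      push_neg at h
      exact hgφ (LinearMap.ext fun x => h x)
    obtain ⟨x₀, hx₀⟩ := hex
    set w₁ : Fin m → ZMod p := (g (φ x₀))⁻¹ • φ x₀ with hw₁def
    have hw₁range : w₁ ∈ LinearMap.range φ :=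
      Submodule.smul_mem _ _ ⟨x₀, rfl⟩
    have hgw₁ : g w₁ = 1 := by
      rw [hw₁def, map_smul, smul_eq_mul]
      exact inv_mul_cancel₀ hx₀
    set W₀ : Submodule (ZMod p) (Fin m → ZMod p) := LinearMap.ker g ⊓ LinearMap.range φ with hW₀
    set d := Module.finrank (ZMod p) W₀ with hd
    let b : Module.Basis (Fin d) (ZMod p) W₀ := Module.finBasis (ZMod p) W₀
    set t : Fin d → (Fin m → ZMod p) := fun i => (b i : Fin m → ZMod p) with ht
    have ht_mem : ∀ i, (t i) ∈ W₀ := fun i => (b i).2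
    have ht_ker : ∀ i, g (t i) = 0 := fun i => (Submodule.mem_inf.1 (ht_mem i)).1
    have ht_range : ∀ i, t i ∈ LinearMap.range φ := fun i => (Submodule.mem_inf.1 (ht_mem i)).2
    have hspan : ∀ w, w ∈ W₀ → w ∈ Submodule.span (ZMod p) (Set.range t) := by
      intro w hw
      have h1 : (⟨w, hw⟩ : W₀) ∈ Submodule.span (ZMod p) (Set.range b) := by
        rw [b.span_eq]; trivial
      have h2 : w ∈ Submodule.map W₀.subtype (Submodule.span (ZMod p) (Set.range b)) :=
        ⟨_, h1, rfl⟩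
      rw [Submodule.map_span] at h2
      have h3 : W₀.subtype '' Set.range b = Set.range t := by
        rw [← Set.range_comp]; rfl
      rwa [h3] at h2
    -- sums of basis vectors
    have hsum : ∀ (x : Fin m → ZMod p) (hx : x ∈ W₀), (∑ k, (b.repr ⟨x, hx⟩) k • t k) = x := by
      intro x hx
      have := b.sum_repr ⟨x, hx⟩
      calc (∑ k, (b.repr ⟨x, hx⟩) k • t k)
          = ((∑ k, (b.repr ⟨x, hx⟩) k • b k : W₀) : Fin m → ZMod p) := by
            push_cast [ht]; rfl
        _ = x := by rw [this]
    have hrepr : ∀ (c : Fin d → ZMod p) (hc : (∑ i, c i • t i) ∈ W₀),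
        (fun k => (b.repr ⟨∑ i, c i • t i, hc⟩) k) = c := by
      intro c hc
      have h1 : (⟨∑ i, c i • t i, hc⟩ : W₀) = ∑ i, c i • b i := by
        apply Subtype.ext
        push_cast [ht]
        rfl
      funext k
      rw [h1, b.repr_sum_self]
    -- main identity
    set Q := eF p m d t w₁ with hQ
    have hMI : ∀ w, w ∈ LinearMap.range φ → eF p m d t w = MvPolynomial.C (g w) * Q := by
      intro w hw
      have hmem : w - g w • w₁ ∈ W₀ := by
        refine Submodule.mem_inf.2 ⟨?_, ?_⟩
        · rw [LinearMap.mem_ker, map_sub, map_smul, hgw₁, smul_eq_mul, mul_one, sub_self]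
        · exact Submodule.sub_mem _ hw (Submodule.smul_mem _ _ hw₁range)
      have h0 := eF_span_zero p m d t _ (hspan _ hmem)
      rw [eF_sub, eF_smul] at h0
      exact sub_eq_zero.mp h0
    -- product identity
    set S' := S.filter (fun v => g v ≠ 0) with hS'
    set γ : ZMod p := ∏ v ∈ S', (g v)⁻¹ with hγ
    set R := ∏ v ∈ S', linForm p m v with hR
    have hγne : γ ≠ 0 := by
      rw [hγ]
      apply Finset.prod_ne_zero_iff.2
      intro v hv
      exact inv_ne_zero (Finset.mem_filter.1 hv).2
    -- facts about w₁ - ∑ c i • t i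
    have hwc_range : ∀ c : Fin d → ZMod p, w₁ - (∑ i, c i • t i) ∈ LinearMap.range φ := by
      intro c
      exact Submodule.sub_mem _ hw₁range
        (Submodule.sum_mem _ fun i _ => Submodule.smul_mem _ _ (ht_range i))
    have hwc_g : ∀ c : Fin d → ZMod p, g (w₁ - (∑ i, c i • t i)) = 1 := by
      intro c
      rw [map_sub, hgw₁, map_sum]
      rw [Finset.sum_congr rfl fun i _ => by rw [map_smul, ht_ker i, smul_zero]]
      simp
    have hvW : ∀ v ∈ S', w₁ - (g v)⁻¹ • v ∈ W₀ := by
      intro v hv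
      have hvS : v ∈ S := (Finset.mem_filter.1 hv).1
      have hvg : g v ≠ 0 := (Finset.mem_filter.1 hv).2
      refine Submodule.mem_inf.2 ⟨?_, ?_⟩
      · rw [LinearMap.mem_ker, map_sub, hgw₁, map_smul, smul_eq_mul,
          inv_mul_cancel₀ hvg, sub_self]
      · exact Submodule.sub_mem _ hw₁range
          (Submodule.smul_mem _ _ (hS.1 v hvS).1)
    have hPI : Q = MvPolynomial.C γ * R := by
      rw [hQ, eF_prod p m d t w₁, hγ, hR, map_prod, ← Finset.prod_mul_distrib]
      symm
      refine Finset.prod_bij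
        (fun v hv => fun k => (b.repr ⟨w₁ - (g v)⁻¹ • v, hvW v hv⟩) k)
        (fun v hv => Finset.mem_univ _) ?_ ?_ ?_
      · -- injectivity
        intro v₁ hv₁ v₂ hv₂ heq
        have h1 := congrArg (fun c : Fin d → ZMod p => ∑ k, c k • t k) heq
        rw [hsum _ (hvW v₁ hv₁), hsum _ (hvW v₂ hv₂)] at h1
        have h2 : (g v₁)⁻¹ • v₁ = (g v₂)⁻¹ • v₂ := sub_right_injective h1
        have hv₁g : g v₁ ≠ 0 := (Finset.mem_filter.1 hv₁).2
        have hv₂g : g v₂ ≠ 0 := (Finset.mem_filter.1 hv₂).2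
        have hwne : (g v₁)⁻¹ • v₁ ≠ 0 := by
          intro hzero
          have := congrArg g hzero
          rw [map_smul, smul_eq_mul, inv_mul_cancel₀ hv₁g, map_zero] at this
          exact one_ne_zero this
        have hwrange : (g v₁)⁻¹ • v₁ ∈ LinearMap.range φ :=
          Submodule.smul_mem _ _ (hS.1 v₁ (Finset.mem_filter.1 hv₁).1).1
        obtain ⟨u, _, huniq⟩ := hS.2 ((g v₁)⁻¹ • v₁) hwrange hwne
        have e1 : v₁ = u := huniq v₁ ⟨(Finset.mem_filter.1 hv₁).1, (g v₁)⁻¹, rfl⟩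
        have e2 : v₂ = u := huniq v₂ ⟨(Finset.mem_filter.1 hv₂).1, (g v₂)⁻¹, h2⟩
        rw [e1, e2]
      · -- surjectivity
        intro c _
        have hne : w₁ - (∑ i, c i • t i) ≠ 0 := by
          intro hzero
          have := hwc_g c
          rw [hzero, map_zero] at this
          exact one_ne_zero this.symm
        obtain ⟨u, ⟨huS, e, he⟩, _⟩ := hS.2 _ (hwc_range c) hne
        have hgu : g u ≠ 0 := by
          intro h0
          have := hwc_g c
          rw [he, map_smul, h0, smul_zero] at this
          exact one_ne_zero this.symm
        have huS' : u ∈ S' := Finset.mem_filter.2 ⟨huS, hgu⟩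
        have hei : e = (g u)⁻¹ := by
          have h1 := hwc_g c
          rw [he, map_smul, smul_eq_mul] at h1
          field_simp at h1 ⊢
          rw [h1]
        refine ⟨u, huS', ?_⟩
        have hx : w₁ - (g u)⁻¹ • u = ∑ i, c i • t i := by
          rw [← hei, ← he]
          abel
        have hmem : (∑ i, c i • t i) ∈ W₀ := hx ▸ hvW u huS'
        have hc := hrepr c hmem
        conv_rhs => rw [← hc]
        refine funext fun k => ?_
        have hsub : (⟨w₁ - (g u)⁻¹ • u, hvW u huS'⟩ : W₀) = ⟨∑ i, c i • t i, hmem⟩ :=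
          Subtype.ext hx
        exact congrArg (fun x : W₀ => (b.repr x) k) hsub
      · -- values
        intro v hv
        have hvg : g v ≠ 0 := (Finset.mem_filter.1 hv).2
        have harg : w₁ - (∑ k, (b.repr ⟨w₁ - (g v)⁻¹ • v, hvW v hv⟩) k • t k)
            = (g v)⁻¹ • v := by
          rw [hsum _ (hvW v hv)]
          abel
        rw [harg, linForm_smul]
    -- coefficients
    obtain ⟨a, ha0, ha⟩ := eF_coeff p m d t
    have key : ∀ w, w ∈ LinearMap.range φ →
        MvPolynomial.C (g w) * (R ^ p ^ s)
        = ∑ j ∈ Finset.range (d + 1),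
            (MvPolynomial.C γ⁻¹ * a j ^ p ^ s) * linForm p m w ^ p ^ (j + s) := by
      intro w hw
      have h1 : (eF p m d t w) ^ p ^ s
          = ∑ j ∈ Finset.range (d + 1), a j ^ p ^ s * linForm p m w ^ p ^ (j + s) := by
        rw [ha w, sum_pow_char_pow]
        refine Finset.sum_congr rfl fun j _ => ?_
        rw [mul_pow, ← pow_mul, ← pow_add]
      have h2 : (eF p m d t w) ^ p ^ s
          = MvPolynomial.C (g w) * MvPolynomial.C γ * R ^ p ^ s := by
        rw [hMI w hw, hPI, ← mul_assoc, mul_pow, mul_pow,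
          ← map_pow (MvPolynomial.C (R := ZMod p) (σ := Fin m)) (g w) (p ^ s),
          ← map_pow (MvPolynomial.C (R := ZMod p) (σ := Fin m)) γ (p ^ s),
          ZMod.pow_card_pow, ZMod.pow_card_pow]
      calc MvPolynomial.C (g w) * (R ^ p ^ s)
          = MvPolynomial.C γ⁻¹ * (MvPolynomial.C (g w) * MvPolynomial.C γ * R ^ p ^ s) := by
            rw [← mul_assoc]
            rw [show MvPolynomial.C (R := ZMod p) γ⁻¹ * (MvPolynomial.C (g w) * MvPolynomial.C γ)
              = MvPolynomial.C (γ⁻¹ * γ) * MvPolynomial.C (g w) by rw [map_mul]; ring,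
              inv_mul_cancel₀ hγne, map_one, one_mul]
        _ = MvPolynomial.C γ⁻¹ * (eF p m d t w) ^ p ^ s := by rw [h2]
        _ = ∑ j ∈ Finset.range (d + 1),
              (MvPolynomial.C γ⁻¹ * a j ^ p ^ s) * linForm p m w ^ p ^ (j + s) := by
            rw [h1, Finset.mul_sum]
            exact Finset.sum_congr rfl fun j _ => by ring
    -- final equality of derivations
    have hProd : (∏ v ∈ S', linForm p m v ^ p ^ s) = R ^ p ^ s := by
      rw [hR, ← Finset.prod_pow]
    have hfinal : (∏ v ∈ S', linForm p m v ^ p ^ s) • constDer p m (g ∘ₗ φ)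
        = ∑ j ∈ Finset.range (d + 1),
            (MvPolynomial.C γ⁻¹ * a j ^ p ^ s) • frobDer p m φ (j + s) := by
      apply MvPolynomial.derivation_ext
      intro i
      have hsumapp : ∀ (u : Finset ℕ)
          (D : ℕ → Derivation (ZMod p) (MvPolynomial (Fin m) (ZMod p))
            (MvPolynomial (Fin m) (ZMod p))),
          (∑ j ∈ u, D j) (MvPolynomial.X i) = ∑ j ∈ u, (D j) (MvPolynomial.X i) := by
        intro u D
        induction u using Finset.induction with
        | empty => simp
        | insert _ _ hju ihu =>
          rw [Finset.sum_insert hju, Finset.sum_insert hju, Derivation.add_apply, ihu]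
      rw [hsumapp]
      rw [Derivation.smul_apply]
      unfold constDer frobDer
      rw [MvPolynomial.mkDerivation_X]
      rw [Finset.sum_congr rfl fun j _ => by
        rw [Derivation.smul_apply, MvPolynomial.mkDerivation_X]]
      have hw : φ (Pi.single i 1) ∈ LinearMap.range φ := ⟨Pi.single i 1, rfl⟩
      have := key (φ (Pi.single i 1)) hw
      rw [hProd]
      rw [smul_eq_mul, mul_comm]
      rw [show (g ∘ₗ φ) (Pi.single i 1) = g (φ (Pi.single i 1)) from rfl]
      rw [this]
      exact Finset.sum_congr rfl fun j _ => by rw [smul_eq_mul]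
    rw [hfinal]
    apply Submodule.sum_mem
    intro j _
    apply Submodule.smul_mem
    apply Submodule.subset_span
    exact ⟨j + s, Nat.le_add_left s j, rfl⟩
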